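/- Let U be proper, lsc, and σ-strongly convex with σ > 0, and let γ > 0. Then the Moreau envelope U_γ is (σ/(1+γσ))-strongly convex. Conversely, if U_γ is (σ/(1+γσ))-strongly convex, then U is σ-strongly convex. -/

import Mathlib

open EReal Topology

lemma myExistsReal (x : EReal) (hb : x ≠ ⊥) (ht : x ≠ ⊤) : ∃ r : ℝ, x = r := by
  induction x <;> simp_all

lemma myAddCoeLe (X : EReal) (c r : ℝ) : X + (c:EReal) ≤ (r:EReal) ↔ X ≤ ((r - c:ℝ):EReal) := by
  induction X
  · simp
  · norm_cast; constructor <;> intro <;> linarith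
  · rw [top_add_coe]
    exact iff_of_false (EReal.coe_lt_top r).not_ge (EReal.coe_lt_top _).not_ge

lemma myCoeLtAdd (X : EReal) (c s : ℝ) : (c:EReal) < X + (s:EReal) ↔ ((c - s:ℝ):EReal) < X := by
  induction X
  · simp
  · norm_cast; constructor <;> intro <;> linarith
  · rw [top_add_coe]
    exact iff_of_true (EReal.coe_lt_top _) (EReal.coe_lt_top _)

lemma myMulCoeLe (X : EReal) (a s : ℝ) (ha : 0 < a) (h : X ≤ (s:EReal)) :
    (a:EReal) * X ≤ ((a*s : ℝ):EReal) := by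
  induction X
  · rw [EReal.coe_mul_bot_of_pos ha]; exact bot_le
  · norm_cast at h ⊢; nlinarith
  · exact absurd h (by simp)

lemma myMulNeBot (X : EReal) (a : ℝ) (ha : 0 ≤ a) (h : X ≠ ⊥) : (a:EReal) * X ≠ ⊥ := by
  induction X
  · simp_all
  · rw [← EReal.coe_mul]; exact coe_ne_bot _
  · rcases eq_or_lt_of_le ha with h'|h'
    · rw [← h']; simp
    · rw [EReal.coe_mul_top_of_pos h']; simp

lemma myAddNeBot (X Y : EReal) (hx : X ≠ ⊥) (hy : Y ≠ ⊥) : X + Y ≠ ⊥ := by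
  rw [Ne, EReal.add_eq_bot_iff]; tauto

lemma myTopAdd (Y : EReal) (hy : Y ≠ ⊥) : ⊤ + Y = ⊤ := EReal.top_add_of_ne_bot hy

lemma myEqBot (X : EReal) (h : ∀ m : ℝ, X ≤ (m:EReal)) : X = ⊥ := by
  by_contra hne
  obtain ⟨m, hm1, hm2⟩ := EReal.exists_between_coe_real (Ne.bot_lt hne)
  exact absurd (h m) (not_le.2 hm2)

lemma myLeCoeEps (X : EReal) (r : ℝ) (h : ∀ ε : ℝ, 0 < ε → X ≤ ((r + ε:ℝ):EReal)) :
    X ≤ (r:EReal) := by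
  by_contra hne
  obtain ⟨m, hm1, hm2⟩ := EReal.exists_between_coe_real (not_le.1 hne)
  have := h (m - r) (by exact_mod_cast sub_pos.2 (by exact_mod_cast hm1))
  simp only [add_sub_cancel] at this
  exact absurd this (not_le.2 hm2)

lemma myMulDistrib (X : EReal) (a s : ℝ) (ha : 0 ≤ a) (hx : X ≠ ⊥) :
    (a:EReal) * (X + (s:EReal)) = (a:EReal) * X + ((a*s:ℝ):EReal) := by
  induction X
  · simp_all
  · norm_cast; ring
  · rw [EReal.top_add_of_ne_bot (by simp)]
    rcases eq_or_lt_of_le ha with h'|h'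
    · rw [← h']; norm_num
    · rw [EReal.coe_mul_top_of_pos h',
        EReal.top_add_of_ne_bot (coe_ne_bot _)]

-- norm of convex combination in a real inner product space
lemma myCombNormSq {E : Type*} [NormedAddCommGroup E] [InnerProductSpace ℝ E]
    (v w : E) (a b : ℝ) (hab : a + b = 1) :
    ‖a • v + b • w‖^2 = a*‖v‖^2 + b*‖w‖^2 - a*b*‖v-w‖^2 := by
  have h1 : ‖a • v + b • w‖^2 = ‖a • v‖^2 + 2 * inner ℝ (a • v) (b • w) + ‖b • w‖^2 :=
    norm_add_sq_real _ _
  have h2 : ‖v - w‖^2 = ‖v‖^2 - 2 * inner ℝ v w + ‖w‖^2 := norm_sub_sq_real _ _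
  have h3 : (inner ℝ (a • v) (b • w) : ℝ) = a * b * inner ℝ v w := by
    rw [real_inner_smul_left, real_inner_smul_right]; ring
  have h4 : ‖a • v‖^2 = a^2 * ‖v‖^2 := by
    rw [norm_smul, mul_pow, Real.norm_eq_abs, sq_abs]
  have h5 : ‖b • w‖^2 = b^2 * ‖w‖^2 := by
    rw [norm_smul, mul_pow, Real.norm_eq_abs, sq_abs]
  have hb : b = 1 - a := by linarith
  subst hb
  rw [h1, h3, h4, h5, h2]; ring

-- key scalar inequality for the forward direction
lemma myScalarIneq (σ γ A B D : ℝ) (hσ : 0 < σ) (hγ : 0 < γ) (hA : 0 ≤ A) (hB : 0 ≤ B)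
    (hD : 0 ≤ D) (hABD : A ≤ B + D) :
    σ/(1+γ*σ) * A^2 ≤ (1/γ) * B^2 + σ * D^2 := by
  have h1 : A^2 ≤ (B+D)^2 := by nlinarith
  have h2 : 0 < 1 + γ*σ := by nlinarith
  rw [div_mul_eq_mul_div, div_le_iff₀ h2]
  have e : (1/γ * B^2 + σ*D^2) * (1+γ*σ) - σ*(B+D)^2 = (1/γ) * (B - γ*σ*D)^2 := by
    field_simp; ring
  have e2 : σ * A^2 ≤ σ * (B+D)^2 := mul_le_mul_of_nonneg_left h1 hσ.le
  have e3 : 0 ≤ (1/γ) * (B - γ*σ*D)^2 :=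
    mul_nonneg (one_div_pos.mpr hγ).le (sq_nonneg _)
  linarith

-- master lemma: pointwise bound implies bound by combination of infima
lemma myMaster {ι : Type*} [Nonempty ι] (L : EReal) (a b : ℝ) (ha : 0 < a) (hb : 0 < b)
    (g₁ g₂ : ι → EReal) (hg₁b : ∀ i, g₁ i ≠ ⊥) (hg₂b : ∀ i, g₂ i ≠ ⊥)
    (hg₁t : ∃ i, g₁ i ≠ ⊤) (hg₂t : ∃ i, g₂ i ≠ ⊤)
    (hP : ∀ i j, L ≤ (a:EReal) * g₁ i + (b:EReal) * g₂ j) :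
    L ≤ (a:EReal) * (⨅ i, g₁ i) + (b:EReal) * (⨅ j, g₂ j) := by
  have realify : ∀ (g : ι → EReal) (i : ι) (r : ℝ), g i ≠ ⊥ → g i < (r:EReal) →
      ∃ s : ℝ, g i = (s:EReal) ∧ s < r := by
    intro g i r hbot hlt
    obtain ⟨s, hs⟩ := myExistsReal (g i) hbot (fun h => absurd (h ▸ hlt) (by simp))
    exact ⟨s, hs, by exact_mod_cast hs ▸ hlt⟩
  by_cases hb1 : (⨅ i, g₁ i) = ⊥
  · have hL : L = ⊥ := by
      apply myEqBot; intro m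
      obtain ⟨j₀, hj₀t⟩ := hg₂t
      obtain ⟨u, hu⟩ := myExistsReal (g₂ j₀) (hg₂b j₀) hj₀t
      have hlt : (⨅ i, g₁ i) < ((m - b*u)/a : ℝ) := hb1 ▸ bot_lt_coe _
      obtain ⟨i, hi⟩ := iInf_lt_iff.mp hlt
      obtain ⟨s, hs, hsr⟩ := realify g₁ i _ (hg₁b i) hi
      have hle := hP i j₀
      rw [hs, hu] at hle
      have hcast : (a:EReal)*(s:EReal) + (b:EReal)*(u:EReal) = ((a*s+b*u:ℝ):EReal) := by
        norm_cast
      rw [hcast] at hle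
      refine hle.trans (EReal.coe_le_coe_iff.mpr ?_)
      have := (le_div_iff₀ ha).mp hsr.le
      linarith
    rw [hL]; exact bot_le
  by_cases hb2 : (⨅ j, g₂ j) = ⊥
  · have hL : L = ⊥ := by
      apply myEqBot; intro m
      obtain ⟨i₀, hi₀t⟩ := hg₁t
      obtain ⟨u, hu⟩ := myExistsReal (g₁ i₀) (hg₁b i₀) hi₀t
      have hlt : (⨅ j, g₂ j) < ((m - a*u)/b : ℝ) := hb2 ▸ bot_lt_coe _
      obtain ⟨j, hj⟩ := iInf_lt_iff.mp hlt
      obtain ⟨s, hs, hsr⟩ := realify g₂ j _ (hg₂b j) hj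
      have hle := hP i₀ j
      rw [hs, hu] at hle
      have hcast : (a:EReal)*(u:EReal) + (b:EReal)*(s:EReal) = ((a*u+b*s:ℝ):EReal) := by
        norm_cast
      rw [hcast] at hle
      refine hle.trans (EReal.coe_le_coe_iff.mpr ?_)
      have := (le_div_iff₀ hb).mp hsr.le
      linarith
    rw [hL]; exact bot_le
  by_cases ht1 : (⨅ i, g₁ i) = ⊤
  · rw [ht1, EReal.coe_mul_top_of_pos ha, myTopAdd _ (myMulNeBot _ b hb.le hb2)]
    exact le_top
  by_cases ht2 : (⨅ j, g₂ j) = ⊤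
  · rw [ht2, EReal.coe_mul_top_of_pos hb, add_comm,
      myTopAdd _ (myMulNeBot _ a ha.le hb1)]
    exact le_top
  obtain ⟨I₁, hI₁⟩ := myExistsReal _ hb1 ht1
  obtain ⟨I₂, hI₂⟩ := myExistsReal _ hb2 ht2
  rw [hI₁, hI₂]
  have hcast : (a:EReal)*(I₁:EReal) + (b:EReal)*(I₂:EReal) = ((a*I₁+b*I₂:ℝ):EReal) := by
    norm_cast
  rw [hcast]
  apply myLeCoeEps; intro ε hε
  have h1 : (⨅ i, g₁ i) < ((I₁ + ε/(2*a) : ℝ):EReal) := by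
    rw [hI₁]; exact_mod_cast lt_add_of_pos_right _ (by positivity)
  have h2 : (⨅ j, g₂ j) < ((I₂ + ε/(2*b) : ℝ):EReal) := by
    rw [hI₂]; exact_mod_cast lt_add_of_pos_right _ (by positivity)
  obtain ⟨i, hi⟩ := iInf_lt_iff.mp h1
  obtain ⟨j, hj⟩ := iInf_lt_iff.mp h2
  obtain ⟨s₁, hs₁, hs₁r⟩ := realify g₁ i _ (hg₁b i) hi
  obtain ⟨s₂, hs₂, hs₂r⟩ := realify g₂ j _ (hg₂b j) hj
  have hle := hP i j
  rw [hs₁, hs₂] at hle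
  have hcast2 : (a:EReal)*(s₁:EReal) + (b:EReal)*(s₂:EReal) = ((a*s₁+b*s₂:ℝ):EReal) := by
    norm_cast
  rw [hcast2] at hle
  refine hle.trans (EReal.coe_le_coe_iff.mpr ?_)
  have e1 : a * (ε/(2*a)) = ε/2 := by field_simp
  have e2 : b * (ε/(2*b)) = ε/2 := by field_simp
  nlinarith [mul_le_mul_of_nonneg_left hs₁r.le ha.le, mul_le_mul_of_nonneg_left hs₂r.le hb.le]

section
variable {n : ℕ}
local notation "E" => EuclideanSpace ℝ (Fin n)

lemma myAffineMinorant (f : E → EReal)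
    (hproper : ∃ x, f x ≠ ⊤) (hnebot : ∀ x, f x ≠ ⊥)
    (hlsc : LowerSemicontinuous f)
    (hconv : ∀ x y : E, ∀ a b : ℝ, 0 ≤ a → 0 ≤ b → a + b = 1 →
      f (a • x + b • y) ≤ (a : EReal) * f x + (b : EReal) * f y)
    (z : E) (t : ℝ) (ht : (t:EReal) < f z) :
    ∃ (p : E) (c : ℝ),
      (∀ y, ((inner ℝ p y + c : ℝ) : EReal) ≤ f y) ∧ t < (inner ℝ p z : ℝ) + c := by
  classical
  set S : Set (E × ℝ) := {q | f q.1 ≤ (q.2:EReal)} with hSdef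
  obtain ⟨x₀, hx₀t⟩ := hproper
  obtain ⟨r₀, hr₀⟩ := myExistsReal _ (hnebot x₀) hx₀t
  have hmemS : ∀ (y : E) (r : ℝ), f y ≤ (r:EReal) → ((y, r) : E × ℝ) ∈ S := by
    intro y r h; exact h
  have hmemS' : ∀ q : E × ℝ, q ∈ S → f q.1 ≤ (q.2:EReal) := fun q h => h
  have hSconv : Convex ℝ S := by
    intro q₁ hq₁ q₂ hq₂ a b ha hb hab
    have h1 := hmemS' _ hq₁
    have h2 := hmemS' _ hq₂
    have h1t : f q₁.1 ≠ ⊤ := by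
      intro h; rw [h] at h1; exact absurd (top_le_iff.mp h1) (coe_ne_top _)
    have h2t : f q₂.1 ≠ ⊤ := by
      intro h; rw [h] at h2; exact absurd (top_le_iff.mp h2) (coe_ne_top _)
    obtain ⟨s₁, hs₁⟩ := myExistsReal _ (hnebot q₁.1) h1t
    obtain ⟨s₂, hs₂⟩ := myExistsReal _ (hnebot q₂.1) h2t
    have hs₁r : s₁ ≤ q₁.2 := by rw [hs₁] at h1; exact_mod_cast h1
    have hs₂r : s₂ ≤ q₂.2 := by rw [hs₂] at h2; exact_mod_cast h2
    have key : f (a • q₁.1 + b • q₂.1) ≤ ((a * q₁.2 + b * q₂.2 : ℝ) : EReal) := by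
      calc f (a • q₁.1 + b • q₂.1) ≤ (a:EReal) * f q₁.1 + (b:EReal) * f q₂.1 :=
            hconv _ _ a b ha hb hab
        _ = ((a * s₁ + b * s₂ : ℝ) : EReal) := by rw [hs₁, hs₂]; norm_cast
        _ ≤ _ := by
            apply EReal.coe_le_coe_iff.mpr
            have := mul_le_mul_of_nonneg_left hs₁r ha
            have := mul_le_mul_of_nonneg_left hs₂r hb
            linarith
    exact hmemS _ _ key
  have hSclosed : IsClosed S := by
    rw [← isOpen_compl_iff, isOpen_iff_mem_nhds]
    rintro ⟨x, r⟩ hq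
    have hq' : (r:EReal) < f x := by
      by_contra h
      exact hq (hmemS _ _ (not_lt.mp h))
    obtain ⟨m, hm1, hm2⟩ := EReal.exists_between_coe_real hq'
    have h1 : {x' : E | (m:EReal) < f x'} ∈ 𝓝 x := hlsc x _ hm2
    have h2 : Set.Iio m ∈ 𝓝 r := Iio_mem_nhds (by exact_mod_cast hm1)
    rw [nhds_prod_eq]
    apply Filter.mem_of_superset (Filter.prod_mem_prod h1 h2)
    rintro ⟨x', r'⟩ ⟨ha', hb'⟩
    intro hmem
    have := hmemS' _ hmem
    have h3 : (m:EReal) < f x' := ha'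
    have h4 : (r':ℝ) < m := hb'
    have : (m:EReal) ≤ (r':EReal) := le_trans (le_of_lt h3) this
    exact absurd (EReal.coe_le_coe_iff.mp this) (not_le.2 h4)
  have hdec : ∀ (ψ : (E × ℝ) →L[ℝ] ℝ) (y : E) (r : ℝ),
      ψ (y, r) = ψ (y, 0) + r * ψ (0, 1) := by
    intro ψ y r
    have : ((y, r) : E × ℝ) = (y, 0) + r • ((0 : E), (1:ℝ)) := by
      apply Prod.ext <;> simp
    rw [this, map_add, map_smul, smul_eq_mul]
  have sep : ∀ w : E × ℝ, w ∉ S →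
      ∃ (ψ : (E × ℝ) →L[ℝ] ℝ) (u : ℝ), 0 ≤ ψ (0,1) ∧
        (∀ q ∈ S, u < ψ q) ∧ ψ w < u := by
    intro w hw
    obtain ⟨ψ, u, hwu, hSu⟩ := geometric_hahn_banach_point_closed hSconv hSclosed hw
    refine ⟨ψ, u, ?_, hSu, hwu⟩
    by_contra hneg
    push_neg at hneg
    set β := ψ (0,1) with hβ
    have hmem : ∀ k : ℝ, 0 ≤ k → ((x₀, r₀ + k) : E × ℝ) ∈ S := by
      intro k hk
      apply hmemS
      rw [hr₀]
      exact_mod_cast by linarith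
    set k := max 0 ((u - ψ (x₀,0))/β - r₀) with hkdef
    have hk0 : 0 ≤ k := le_max_left _ _
    have h := hSu _ (hmem k hk0)
    rw [hdec ψ] at h
    have hk : (u - ψ (x₀,0))/β - r₀ ≤ k := le_max_right _ _
    have h2 : (u - ψ (x₀,0))/β ≤ r₀ + k := by linarith
    have h3 : (r₀ + k) * β ≤ ((u - ψ (x₀,0))/β) * β := by nlinarith
    have h4 : ((u - ψ (x₀,0))/β) * β = u - ψ (x₀,0) :=
      div_mul_cancel₀ _ (ne_of_lt hneg)
    linarith
  have hw1 : ((x₀, r₀ - 1) : E × ℝ) ∉ S := by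
    intro h
    have := hmemS' _ h
    rw [hr₀] at this
    have : r₀ ≤ r₀ - 1 := by exact_mod_cast this
    linarith
  obtain ⟨ψ₁, u₁, hβ₁0, hS₁, hw₁⟩ := sep _ hw1
  set β₁ := ψ₁ (0,1) with hβ₁def
  have hmem_x₀ : ((x₀, r₀) : E × ℝ) ∈ S := hmemS _ _ (le_of_eq hr₀)
  have hβ₁ : 0 < β₁ := by
    rcases hβ₁0.lt_or_eq with h | h
    · exact h
    · exfalso
      have ha := hS₁ _ hmem_x₀
      rw [hdec ψ₁, ← hβ₁def] at ha hw₁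
      rw [← h, mul_zero] at ha hw₁
      linarith
  have hmin₁ : ∀ (y : E) (r : ℝ), f y ≤ (r:EReal) → (u₁ - ψ₁ (y,0))/β₁ ≤ r := by
    intro y r hyr
    have := hS₁ _ (hmemS _ _ hyr)
    rw [hdec ψ₁] at this
    rw [div_le_iff₀ hβ₁]
    linarith
  -- main construction: an affine minorant exceeding t at z
  suffices h : ∃ (L : E →L[ℝ] ℝ) (c : ℝ),
      (∀ y, ((L y + c : ℝ):EReal) ≤ f y) ∧ t < L z + c by
    obtain ⟨L, c, hLmin, hLz⟩ := h
    refine ⟨(InnerProductSpace.toDual ℝ E).symm L, c, ?_, ?_⟩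
    · intro y
      rw [InnerProductSpace.toDual_symm_apply]
      exact hLmin y
    · rw [InnerProductSpace.toDual_symm_apply]
      exact hLz
  have hw2 : ((z, t) : E × ℝ) ∉ S := fun h => absurd (hmemS' _ h) (not_le.2 ht)
  obtain ⟨ψ₂, u₂, hβ₂0, hS₂, hw₂⟩ := sep _ hw2
  set β₂ := ψ₂ (0,1) with hβ₂def
  rcases hβ₂0.lt_or_eq with hβ₂ | hβ₂
  · -- nonvertical separator at (z,t)
    refine ⟨(-(1/β₂)) • (ψ₂.comp (ContinuousLinearMap.inl ℝ E ℝ)), u₂/β₂, ?_, ?_⟩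
    · intro y
      have hval : ((-(1/β₂)) • (ψ₂.comp (ContinuousLinearMap.inl ℝ E ℝ))) y + u₂/β₂
          = (u₂ - ψ₂ (y,0))/β₂ := by
        simp [ContinuousLinearMap.smul_apply, ContinuousLinearMap.comp_apply,
          ContinuousLinearMap.inl_apply]
        field_simp
        ring
      rw [hval]
      by_cases hyt : f y = ⊤
      · rw [hyt]; exact le_top
      · obtain ⟨r, hr⟩ := myExistsReal _ (hnebot y) hyt
        rw [hr]
        apply EReal.coe_le_coe_iff.mpr
        have := hS₂ _ (hmemS y r (le_of_eq hr))
        rw [hdec ψ₂] at this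
        rw [div_le_iff₀ hβ₂]
        linarith
    · have hval : ((-(1/β₂)) • (ψ₂.comp (ContinuousLinearMap.inl ℝ E ℝ))) z + u₂/β₂
          = (u₂ - ψ₂ (z,0))/β₂ := by
        simp [ContinuousLinearMap.smul_apply, ContinuousLinearMap.comp_apply,
          ContinuousLinearMap.inl_apply]
        field_simp
        ring
      rw [hval]
      rw [hdec ψ₂] at hw₂
      rw [lt_div_iff₀ hβ₂]
      linarith
  · -- vertical separator: combine with the nonvertical minorant ψ₁
    have hvert : ∀ (y : E) (r : ℝ), f y ≤ (r:EReal) → u₂ < ψ₂ (y,0) := by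
      intro y r hyr
      have := hS₂ _ (hmemS _ _ hyr)
      rw [hdec ψ₂, ← hβ₂def, ← hβ₂, mul_zero, add_zero] at this
      exact this
    have hz2 : ψ₂ (z,0) < u₂ := by
      rw [hdec ψ₂, ← hβ₂def, ← hβ₂, mul_zero, add_zero] at hw₂
      exact hw₂
    set δ := u₂ - ψ₂ (z,0) with hδdef
    have hδ : 0 < δ := by simp [hδdef]; linarith
    set ℓz := (u₁ - ψ₁ (z,0))/β₁ with hℓzdef
    set K := max 0 ((t - ℓz)/δ + 1) with hKdef
    have hK0 : 0 ≤ K := le_max_left _ _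
    refine ⟨(-(1/β₁)) • (ψ₁.comp (ContinuousLinearMap.inl ℝ E ℝ))
        + (-K) • (ψ₂.comp (ContinuousLinearMap.inl ℝ E ℝ)), u₁/β₁ + K*u₂, ?_, ?_⟩
    · intro y
      have hval : ((-(1/β₁)) • (ψ₁.comp (ContinuousLinearMap.inl ℝ E ℝ))
          + (-K) • (ψ₂.comp (ContinuousLinearMap.inl ℝ E ℝ))) y + (u₁/β₁ + K*u₂)
          = (u₁ - ψ₁ (y,0))/β₁ + K * (u₂ - ψ₂ (y,0)) := by
        simp [ContinuousLinearMap.add_apply, ContinuousLinearMap.smul_apply,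
          ContinuousLinearMap.comp_apply, ContinuousLinearMap.inl_apply]
        field_simp
        ring
      rw [hval]
      by_cases hyt : f y = ⊤
      · rw [hyt]; exact le_top
      · obtain ⟨r, hr⟩ := myExistsReal _ (hnebot y) hyt
        rw [hr]
        apply EReal.coe_le_coe_iff.mpr
        have h1 := hmin₁ y r (le_of_eq hr)
        have h2 := hvert y r (le_of_eq hr)
        nlinarith
    · have hval : ((-(1/β₁)) • (ψ₁.comp (ContinuousLinearMap.inl ℝ E ℝ))
          + (-K) • (ψ₂.comp (ContinuousLinearMap.inl ℝ E ℝ))) z + (u₁/β₁ + K*u₂)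
          = ℓz + K * δ := by
        simp [ContinuousLinearMap.add_apply, ContinuousLinearMap.smul_apply,
          ContinuousLinearMap.comp_apply, ContinuousLinearMap.inl_apply, hℓzdef, hδdef]
        field_simp
        ring
      rw [hval]
      have hK : (t - ℓz)/δ + 1 ≤ K := le_max_right _ _
      have h1 : ((t - ℓz)/δ + 1) * δ ≤ K * δ := mul_le_mul_of_nonneg_right hK hδ.le
      have h2 : ((t - ℓz)/δ) * δ = t - ℓz := div_mul_cancel₀ _ (ne_of_gt hδ)
      rw [add_mul, h2, one_mul] at h1
      linarith

end
lemma myCoeLeAdd (X : EReal) (A s : ℝ) : (A:EReal) ≤ X + (s:EReal) ↔ ((A - s:ℝ):EReal) ≤ X := by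
  induction X
  · rw [bot_add]
    exact iff_of_false (fun h => coe_ne_bot A (le_bot_iff.mp h))
      (fun h => coe_ne_bot _ (le_bot_iff.mp h))
  · norm_cast; constructor <;> intro <;> linarith
  · rw [top_add_coe]; exact iff_of_true le_top le_top

section
variable {n : ℕ}
local notation "E" => EuclideanSpace ℝ (Fin n)

lemma myEnvelopeSup (U : E → EReal)
    (hproper : ∃ x, U x ≠ ⊤) (hnebot : ∀ x, U x ≠ ⊥)
    (hlsc : LowerSemicontinuous U)
    (hconv : ∀ x y : E, ∀ a b : ℝ, 0 ≤ a → 0 ≤ b → a + b = 1 →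
      U (a • x + b • y) ≤ (a : EReal) * U x + (b : EReal) * U y)
    (γ : ℝ) (hγ : 0 < γ) (z : E) (t : ℝ) (ht : (t:EReal) < U z) :
    ∃ x : E, ((t + 1/(2*γ) * ‖x - z‖^2 : ℝ) : EReal)
      < ⨅ y, U y + ((1/(2*γ) * ‖x - y‖^2 : ℝ) : EReal) := by
  set g : E → ℝ := fun y => 1/(2*γ) * ‖y‖^2 with hgdef
  set f : E → EReal := fun y => U y + ((g y : ℝ) : EReal) with hfdef
  have hγ2 : (0:ℝ) < 2*γ := by linarith
  have hfbot : ∀ x, f x ≠ ⊥ := fun x => myAddNeBot _ _ (hnebot x) (coe_ne_bot _)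
  have hftop : ∃ x, f x ≠ ⊤ := by
    obtain ⟨x₀, hx₀⟩ := hproper
    obtain ⟨r₀, hr₀⟩ := myExistsReal _ (hnebot x₀) hx₀
    refine ⟨x₀, ?_⟩
    simp only [hfdef, hr₀]
    rw [← EReal.coe_add]
    exact coe_ne_top _
  have hgc : Continuous g := by
    apply Continuous.mul continuous_const
    exact (continuous_norm).pow 2
  have hflsc : LowerSemicontinuous f := by
    intro x c hc
    induction c with
    | bot =>
      exact Filter.Eventually.of_forall fun x' => Ne.bot_lt (hfbot x')
    | coe c =>
      have hc' : ((c - g x : ℝ):EReal) < U x := (myCoeLtAdd (U x) c (g x)).mp hc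
      obtain ⟨r, hr1, hr2⟩ := EReal.exists_between_coe_real hc'
      have hrr : c - g x < r := by exact_mod_cast hr1
      have h1 : ∀ᶠ x' in 𝓝 x, (r:EReal) < U x' := hlsc x _ hr2
      have h2 : ∀ᶠ x' in 𝓝 x, c - r < g x' :=
        (hgc.tendsto x).eventually (eventually_gt_nhds (by linarith))
      filter_upwards [h1, h2] with x' hx1 hx2
      show (c:EReal) < U x' + ((g x' : ℝ):EReal)
      calc (c:EReal) < ((r + g x' : ℝ):EReal) := by exact_mod_cast (by linarith : c < r + g x')
        _ = (r:EReal) + ((g x' : ℝ):EReal) := by norm_cast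
        _ ≤ U x' + ((g x' : ℝ):EReal) := add_le_add (le_of_lt hx1) (le_refl _)
    | top => exact absurd hc (not_top_lt)
  have hfconv : ∀ x y : E, ∀ a b : ℝ, 0 ≤ a → 0 ≤ b → a + b = 1 →
      f (a • x + b • y) ≤ (a : EReal) * f x + (b : EReal) * f y := by
    intro x y a b ha hb hab
    have hgconv : g (a • x + b • y) ≤ a * g x + b * g y := by
      have hcomb := myCombNormSq x y a b hab
      simp only [hgdef]
      rw [hcomb]
      have h1 : 0 ≤ a*b*‖x-y‖^2 := by positivity
      have h2 : (0:ℝ) < 1/(2*γ) := by positivity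
      nlinarith
    calc f (a • x + b • y) = U (a • x + b • y) + ((g (a • x + b • y) : ℝ):EReal) := rfl
      _ ≤ ((a:EReal) * U x + (b:EReal) * U y) + ((a * g x + b * g y : ℝ):EReal) :=
          add_le_add (hconv x y a b ha hb hab) (by exact_mod_cast hgconv)
      _ = ((a:EReal) * U x + ((a * g x:ℝ):EReal)) + ((b:EReal) * U y + ((b * g y:ℝ):EReal)) := by
          rw [EReal.coe_add]; exact add_add_add_comm _ _ _ _
      _ = (a:EReal) * f x + (b:EReal) * f y := by
          rw [← myMulDistrib (U x) a (g x) ha (hnebot x),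
            ← myMulDistrib (U y) b (g y) hb (hnebot y)]
  have ht' : ((t + g z : ℝ):EReal) < f z := by
    apply (myCoeLtAdd (U z) (t + g z) (g z)).mpr
    have : ((t + g z - g z : ℝ)) = t := by ring
    rw [this]
    exact ht
  obtain ⟨p, c, hmin, hz⟩ := myAffineMinorant f hftop hfbot hflsc hfconv z (t + g z) ht'
  refine ⟨γ • p, ?_⟩
  have hexp : ∀ y : E, 1/(2*γ) * ‖γ • p - y‖^2
      = 1/(2*γ) * ‖γ • p‖^2 - inner ℝ p y + g y := by
    intro y
    have hn : ‖γ • p - y‖^2 = ‖γ • p‖^2 - 2*inner ℝ (γ • p) y + ‖y‖^2 := norm_sub_sq_real _ _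
    have hi : (inner ℝ (γ • p) y : ℝ) = γ * inner ℝ p y := real_inner_smul_left _ _ _
    simp only [hgdef]
    rw [hn, hi]
    field_simp
  have hlow : ∀ y : E, ((c + 1/(2*γ) * ‖γ • p‖^2 : ℝ):EReal)
      ≤ U y + ((1/(2*γ) * ‖γ • p - y‖^2 : ℝ):EReal) := by
    intro y
    have h1 : ((inner ℝ p y + c - g y : ℝ):EReal) ≤ U y :=
      (myCoeLeAdd (U y) _ (g y)).mp (hmin y)
    calc ((c + 1/(2*γ) * ‖γ • p‖^2 : ℝ):EReal)
        = ((inner ℝ p y + c - g y : ℝ):EReal) + ((1/(2*γ) * ‖γ • p - y‖^2 : ℝ):EReal) := by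
          rw [← EReal.coe_add]
          congr 1
          rw [hexp y]
          ring
      _ ≤ U y + ((1/(2*γ) * ‖γ • p - y‖^2 : ℝ):EReal) := add_le_add h1 (le_refl _)
  have hstrict : t + 1/(2*γ) * ‖γ • p - z‖^2 < c + 1/(2*γ) * ‖γ • p‖^2 := by
    rw [hexp z]
    simp only [hgdef] at hz ⊢
    linarith
  calc ((t + 1/(2*γ) * ‖γ • p - z‖^2 : ℝ):EReal)
      < ((c + 1/(2*γ) * ‖γ • p‖^2 : ℝ):EReal) := by exact_mod_cast hstrict
    _ ≤ ⨅ y, U y + ((1/(2*γ) * ‖γ • p - y‖^2 : ℝ):EReal) := le_iInf hlow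

end
set_option maxHeartbeats 1000000 in
theorem stmt_6 {n : ℕ} (U : EuclideanSpace ℝ (Fin n) → EReal)
    (hproper : ∃ x, U x ≠ ⊤) (hnebot : ∀ x, U x ≠ ⊥)
    (hlsc : LowerSemicontinuous U)
    (hconv : ∀ x y : EuclideanSpace ℝ (Fin n), ∀ a b : ℝ, 0 ≤ a → 0 ≤ b → a + b = 1 →
      U (a • x + b • y) ≤ (a : EReal) * U x + (b : EReal) * U y)
    (σ γ : ℝ) (hσ : 0 < σ) (hγ : 0 < γ)
    (Uγ : EuclideanSpace ℝ (Fin n) → EReal)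
    (hUγ : ∀ x, Uγ x = ⨅ y, U y + (((1/(2*γ)) * ‖x - y‖^2 : ℝ) : EReal)) :
    (∀ x y : EuclideanSpace ℝ (Fin n), ∀ a b : ℝ, 0 ≤ a → 0 ≤ b → a + b = 1 →
        U (a • x + b • y) + ((a * b * (σ/2) * ‖x - y‖^2 : ℝ) : EReal)
          ≤ (a : EReal) * U x + (b : EReal) * U y)
    ↔ (∀ x y : EuclideanSpace ℝ (Fin n), ∀ a b : ℝ, 0 ≤ a → 0 ≤ b → a + b = 1 →
        Uγ (a • x + b • y) + ((a * b * ((σ/(1+γ*σ))/2) * ‖x - y‖^2 : ℝ) : EReal)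
          ≤ (a : EReal) * Uγ x + (b : EReal) * Uγ y) := by
  have hγσ : (0:ℝ) < 1 + γ*σ := by nlinarith
  constructor
  · -- forward direction
    intro hU x₁ x₂ a b ha0 hb0 hab
    rcases eq_or_lt_of_le ha0 with ha | ha
    · have hb1 : b = 1 := by linarith
      subst hb1
      rw [← ha]
      norm_num
    rcases eq_or_lt_of_le hb0 with hb | hb
    · have ha1 : a = 1 := by linarith
      subst ha1
      rw [← hb]
      norm_num
    rw [hUγ x₁, hUγ x₂]
    apply myMaster _ a b ha hb _ _
      (fun y => myAddNeBot _ _ (hnebot y) (coe_ne_bot _))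
      (fun y => myAddNeBot _ _ (hnebot y) (coe_ne_bot _))
    · obtain ⟨y₀, hy₀⟩ := hproper
      obtain ⟨u₀, hu₀⟩ := myExistsReal _ (hnebot y₀) hy₀
      exact ⟨y₀, by rw [hu₀, ← EReal.coe_add]; exact coe_ne_top _⟩
    · obtain ⟨y₀, hy₀⟩ := hproper
      obtain ⟨u₀, hu₀⟩ := myExistsReal _ (hnebot y₀) hy₀
      exact ⟨y₀, by rw [hu₀, ← EReal.coe_add]; exact coe_ne_top _⟩
    -- pointwise bound
    intro y₁ y₂
    by_cases hy₁t : U y₁ = ⊤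
    · rw [hy₁t, top_add_coe, EReal.coe_mul_top_of_pos ha,
        myTopAdd _ (myMulNeBot _ b hb0 (myAddNeBot _ _ (hnebot y₂) (coe_ne_bot _)))]
      exact le_top
    by_cases hy₂t : U y₂ = ⊤
    · rw [hy₂t, top_add_coe, EReal.coe_mul_top_of_pos hb,
        EReal.add_top_of_ne_bot (myMulNeBot _ a ha0 (myAddNeBot _ _ (hnebot y₁) (coe_ne_bot _)))]
      exact le_top
    obtain ⟨u₁, hu₁⟩ := myExistsReal _ (hnebot y₁) hy₁t
    obtain ⟨u₂, hu₂⟩ := myExistsReal _ (hnebot y₂) hy₂t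
    -- strong convexity of U at y₁, y₂
    have hsc := hU y₁ y₂ a b ha0 hb0 hab
    rw [hu₁, hu₂] at hsc
    have hcast : (a:EReal)*(u₁:EReal) + (b:EReal)*(u₂:EReal) = ((a*u₁+b*u₂:ℝ):EReal) := by
      norm_cast
    rw [hcast] at hsc
    have hY : U (a • y₁ + b • y₂)
        ≤ ((a*u₁+b*u₂ - a * b * (σ/2) * ‖y₁ - y₂‖^2 : ℝ):EReal) :=
      (myAddCoeLe _ _ _).mp hsc
    have henv : Uγ (a • x₁ + b • x₂) ≤ U (a • y₁ + b • y₂)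
        + (((1/(2*γ)) * ‖(a • x₁ + b • x₂) - (a • y₁ + b • y₂)‖^2 : ℝ):EReal) := by
      rw [hUγ]
      exact iInf_le _ _
    rw [hu₁, hu₂]
    have hcast₁ : (a:EReal) * ((u₁:EReal) + (((1/(2*γ)) * ‖x₁ - y₁‖^2 : ℝ):EReal))
        + (b:EReal) * ((u₂:EReal) + (((1/(2*γ)) * ‖x₂ - y₂‖^2 : ℝ):EReal))
        = ((a*(u₁ + (1/(2*γ)) * ‖x₁ - y₁‖^2) + b*(u₂ + (1/(2*γ)) * ‖x₂ - y₂‖^2) : ℝ):EReal) := by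
      norm_cast
    rw [hcast₁]
    -- combine
    have hdiff : (a • x₁ + b • x₂) - (a • y₁ + b • y₂) = a • (x₁ - y₁) + b • (x₂ - y₂) := by
      rw [smul_sub, smul_sub]; abel
    have hcomb := myCombNormSq (x₁ - y₁) (x₂ - y₂) a b hab
    have hvv : (x₁ - y₁) - (x₂ - y₂) = (x₁ - x₂) - (y₁ - y₂) := by abel
    have htri : ‖x₁ - x₂‖ ≤ ‖(x₁ - x₂) - (y₁ - y₂)‖ + ‖y₁ - y₂‖ := by
      have h : x₁ - x₂ = ((x₁ - x₂) - (y₁ - y₂)) + (y₁ - y₂) := by abel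
      calc ‖x₁ - x₂‖ = ‖((x₁ - x₂) - (y₁ - y₂)) + (y₁ - y₂)‖ := by rw [← h]
        _ ≤ _ := norm_add_le _ _
    have hkey := myScalarIneq σ γ ‖x₁ - x₂‖ ‖(x₁ - x₂) - (y₁ - y₂)‖ ‖y₁ - y₂‖
      hσ hγ (norm_nonneg _) (norm_nonneg _) (norm_nonneg _) htri
    -- real inequality
    have hreal : (a*u₁+b*u₂ - a * b * (σ/2) * ‖y₁ - y₂‖^2)
        + (1/(2*γ)) * ‖(a • x₁ + b • x₂) - (a • y₁ + b • y₂)‖^2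
        + a * b * ((σ/(1+γ*σ))/2) * ‖x₁ - x₂‖^2
        ≤ a*(u₁ + (1/(2*γ)) * ‖x₁ - y₁‖^2) + b*(u₂ + (1/(2*γ)) * ‖x₂ - y₂‖^2) := by
      rw [hdiff, hcomb, hvv]
      have hab2 : 0 < a*b := mul_pos ha hb
      have hγne : γ ≠ 0 := ne_of_gt hγ
      have hbr2 : 1/(2*γ)*‖x₁ - x₂ - (y₁ - y₂)‖^2 * 2 = 1/γ*‖x₁ - x₂ - (y₁ - y₂)‖^2 := by
        field_simp
        try ring
      have hkey' : σ/(1+γ*σ)/2 * ‖x₁ - x₂‖^2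
          ≤ 1/(2*γ)*‖x₁ - x₂ - (y₁ - y₂)‖^2 + σ/2*‖y₁ - y₂‖^2 := by
        linarith
      have final := mul_le_mul_of_nonneg_left hkey' hab2.le
      nlinarith [final]
    calc Uγ (a • x₁ + b • x₂) + ((a * b * ((σ/(1+γ*σ))/2) * ‖x₁ - x₂‖^2 : ℝ):EReal)
        ≤ (((a*u₁+b*u₂ - a * b * (σ/2) * ‖y₁ - y₂‖^2)
            + (1/(2*γ)) * ‖(a • x₁ + b • x₂) - (a • y₁ + b • y₂)‖^2 : ℝ):EReal)
          + ((a * b * ((σ/(1+γ*σ))/2) * ‖x₁ - x₂‖^2 : ℝ):EReal) := by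
          apply add_le_add _ (le_refl _)
          calc Uγ (a • x₁ + b • x₂) ≤ U (a • y₁ + b • y₂)
              + (((1/(2*γ)) * ‖(a • x₁ + b • x₂) - (a • y₁ + b • y₂)‖^2 : ℝ):EReal) := henv
            _ ≤ ((a*u₁+b*u₂ - a * b * (σ/2) * ‖y₁ - y₂‖^2 : ℝ):EReal)
                + (((1/(2*γ)) * ‖(a • x₁ + b • x₂) - (a • y₁ + b • y₂)‖^2 : ℝ):EReal) :=
                add_le_add hY (le_refl _)
            _ = _ := by rw [← EReal.coe_add]
      _ ≤ _ := by rw [← EReal.coe_add]; exact_mod_cast hreal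
  · -- converse direction
    intro hM y₁ y₂ a b ha0 hb0 hab
    rcases eq_or_lt_of_le ha0 with ha | ha
    · have hb1 : b = 1 := by linarith
      subst hb1
      rw [← ha]
      norm_num
    rcases eq_or_lt_of_le hb0 with hb | hb
    · have ha1 : a = 1 := by linarith
      subst ha1
      rw [← hb]
      norm_num
    by_cases hy₁t : U y₁ = ⊤
    · rw [hy₁t, EReal.coe_mul_top_of_pos ha,
        myTopAdd _ (myMulNeBot _ b hb0 (hnebot y₂))]
      exact le_top
    by_cases hy₂t : U y₂ = ⊤
    · rw [hy₂t, EReal.coe_mul_top_of_pos hb,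
        EReal.add_top_of_ne_bot (myMulNeBot _ a ha0 (hnebot y₁))]
      exact le_top
    obtain ⟨u₁, hu₁⟩ := myExistsReal _ (hnebot y₁) hy₁t
    obtain ⟨u₂, hu₂⟩ := myExistsReal _ (hnebot y₂) hy₂t
    rw [hu₁, hu₂]
    have hcast : (a:EReal)*(u₁:EReal) + (b:EReal)*(u₂:EReal) = ((a*u₁+b*u₂:ℝ):EReal) := by
      norm_cast
    rw [hcast]
    apply (myAddCoeLe _ _ _).mpr
    set K := a*u₁+b*u₂ - a * b * (σ/2) * ‖y₁ - y₂‖^2 with hKdef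
    by_contra hcon
    push_neg at hcon
    obtain ⟨x, hx⟩ := myEnvelopeSup U hproper hnebot hlsc hconv γ hγ (a • y₁ + b • y₂) K hcon
    rw [← hUγ x] at hx
    -- contradiction with the chain bound
    have hchain : Uγ x ≤ ((K + 1/(2*γ) * ‖x - (a • y₁ + b • y₂)‖^2 : ℝ):EReal) := by
      have hb' : b = 1 - a := by linarith
      subst hb'
      set t0 := 1 + γ*σ with ht0def
      set d := y₁ - y₂ with hddef
      set x₁ := x + ((1-a)*t0) • d with hx₁def
      set x₂ := x - (a*t0) • d with hx₂def
      have hxcomb : a • x₁ + (1-a) • x₂ = x := by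
        rw [hx₁def, hx₂def]
        match_scalars <;> ring
      have hm := hM x₁ x₂ a (1-a) ha0 hb0 hab
      rw [hxcomb] at hm
      have hd12 : x₁ - x₂ = t0 • d := by
        rw [hx₁def, hx₂def]
        match_scalars <;> ring
      have hn12 : ‖x₁ - x₂‖^2 = t0^2 * ‖d‖^2 := by
        rw [hd12, norm_smul, mul_pow, Real.norm_eq_abs, sq_abs]
      have he₁ : Uγ x₁ ≤ ((u₁ + (1/(2*γ)) * ‖x₁ - y₁‖^2 : ℝ):EReal) := by
        rw [hUγ x₁]
        refine le_trans (iInf_le _ y₁) ?_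
        rw [hu₁, ← EReal.coe_add]
      have he₂ : Uγ x₂ ≤ ((u₂ + (1/(2*γ)) * ‖x₂ - y₂‖^2 : ℝ):EReal) := by
        rw [hUγ x₂]
        refine le_trans (iInf_le _ y₂) ?_
        rw [hu₂, ← EReal.coe_add]
      have hRHS : (a:EReal) * Uγ x₁ + ((1-a:ℝ):EReal) * Uγ x₂
          ≤ ((a*(u₁ + (1/(2*γ)) * ‖x₁ - y₁‖^2) + (1-a)*(u₂ + (1/(2*γ)) * ‖x₂ - y₂‖^2) : ℝ):EReal) := by
        rw [EReal.coe_add]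
        exact add_le_add (myMulCoeLe _ _ _ ha he₁) (myMulCoeLe _ _ _ hb he₂)
      have hm2 : Uγ x + ((a * (1-a) * ((σ/(1+γ*σ))/2) * ‖x₁ - x₂‖^2 : ℝ):EReal)
          ≤ ((a*(u₁ + (1/(2*γ)) * ‖x₁ - y₁‖^2) + (1-a)*(u₂ + (1/(2*γ)) * ‖x₂ - y₂‖^2) : ℝ):EReal) :=
        le_trans hm hRHS
      have hm3 := (myAddCoeLe _ _ _).mp hm2
      refine le_trans hm3 (EReal.coe_le_coe_iff.mpr ?_)
      -- real computation
      have key₁ : x₁ - y₁ = (x - (a • y₁ + (1-a) • y₂)) + ((1-a)*(t0-1)) • d := by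
        rw [hx₁def, hddef]
        match_scalars <;> ring
      have key₂ : x₂ - y₂ = (x - (a • y₁ + (1-a) • y₂)) + (a*(1-t0)) • d := by
        rw [hx₂def, hddef]
        match_scalars <;> ring
      set u := x - (a • y₁ + (1-a) • y₂) with hudef
      have hqa : ∀ c : ℝ, ‖u + c • d‖^2 = ‖u‖^2 + 2*c*(inner ℝ u d) + c^2*‖d‖^2 := by
        intro c
        rw [norm_add_sq_real, real_inner_smul_right, norm_smul, mul_pow,
          Real.norm_eq_abs, sq_abs]
        ring
      rw [key₁, key₂, hqa, hqa, hn12, hKdef, ht0def]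
      have hne : (1+γ*σ) ≠ 0 := ne_of_gt hγσ
      have hγne : γ ≠ 0 := ne_of_gt hγ
      generalize ‖u‖^2 = N
      generalize (inner ℝ u d : ℝ) = I
      generalize ‖d‖^2 = D
      apply le_of_eq
      field_simp
      ring
    exact absurd (lt_of_lt_of_le hx hchain) (lt_irrefl _)
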